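/- Modularity maximization is a clique partitioning problem: Let w̄ : Fin n → Fin n → ℝ be the (possibly asymmetric) weight function of a directed network, let T = ∑_{i,j} w̄ i j with T ≠ 0, sᵢⁱⁿ = ∑_j w̄ i j and sⱼᵒᵘᵗ = ∑_i w̄ i j. Define the symmetric weights w i j = w̄ i j / T − sᵢⁱⁿ·sⱼᵒᵘᵗ / T² + w̄ j i / T − sⱼⁱⁿ·sᵢᵒᵘᵗ / T². Then for every partition C : Fin n → ℕ, the modularity Q(C) = (1/T)·∑_{i,j : C i = C j} (w̄ i j − sᵢⁱⁿ·sⱼᵒᵘᵗ / T) equals ∑_{i < j, C i = C j} w i j + D, where D = (1/T)·∑_i (w̄ i i − sᵢⁱⁿ·sᵢᵒᵘᵗ / T) is a constant independent of C. In particular, a partition maximizes modularity if and only if it maximizes the clique partitioning score ∑_{i < j, C i = C j} w i j. -/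

import Mathlib

open Finset

/-- Score of a partition `C` of a weighted complete graph `w`:
sum of weights of edges within clusters, `Q_w(C) = ∑_{i<j, C i = C j} w i j`. -/
noncomputable def cpScore {n : ℕ} (w : Fin n → Fin n → ℝ) (C : Fin n → ℕ) : ℝ :=
  ∑ i : Fin n, ∑ j : Fin n, if i < j ∧ C i = C j then w i j else 0

/-- Trivial upper bound `Q̄(w) = ∑_{i<j, 0 < w i j} w i j`. -/
noncomputable def trivUB {n : ℕ} (w : Fin n → Fin n → ℝ) : ℝ :=
  ∑ i : Fin n, ∑ j : Fin n, if i < j ∧ 0 < w i j then w i j else 0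

/-- `ws` is a subnetwork of `w`: symmetric, `|ws i j| ≤ |w i j|` and weights share signs. -/
def IsSubnetwork {n : ℕ} (w ws : Fin n → Fin n → ℝ) : Prop :=
  (∀ i j, ws i j = ws j i) ∧
  ∀ i j : Fin n, i < j → |ws i j| ≤ |w i j| ∧ 0 ≤ ws i j * w i j

/-- Total weight `T = ∑_{i,j} w̄ i j` of a directed weighted network. -/
noncomputable def totalW {n : ℕ} (wb : Fin n → Fin n → ℝ) : ℝ :=
  ∑ i : Fin n, ∑ j : Fin n, wb i j

/-- In-strength `sᵢⁱⁿ = ∑_j w̄ i j`. -/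
noncomputable def sIn {n : ℕ} (wb : Fin n → Fin n → ℝ) (i : Fin n) : ℝ :=
  ∑ j : Fin n, wb i j

/-- Out-strength `sⱼᵒᵘᵗ = ∑_i w̄ i j`. -/
noncomputable def sOut {n : ℕ} (wb : Fin n → Fin n → ℝ) (j : Fin n) : ℝ :=
  ∑ i : Fin n, wb i j

/-- Modularity of a partition `C`:
`Q(C) = (1/T) ∑_{i,j : C i = C j} (w̄ i j − sᵢⁱⁿ sⱼᵒᵘᵗ / T)`. -/
noncomputable def modularity {n : ℕ} (wb : Fin n → Fin n → ℝ) (C : Fin n → ℕ) : ℝ :=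
  (1 / totalW wb) *
    ∑ i : Fin n, ∑ j : Fin n,
      if C i = C j then wb i j - sIn wb i * sOut wb j / totalW wb else 0

/-- The symmetric clique-partitioning weights associated to modularity:
`w i j = w̄ i j / T − sᵢⁱⁿ sⱼᵒᵘᵗ / T² + w̄ j i / T − sⱼⁱⁿ sᵢᵒᵘᵗ / T²`. -/
noncomputable def modW {n : ℕ} (wb : Fin n → Fin n → ℝ) : Fin n → Fin n → ℝ := fun i j =>
  wb i j / totalW wb - sIn wb i * sOut wb j / (totalW wb) ^ 2
    + wb j i / totalW wb - sIn wb j * sOut wb i / (totalW wb) ^ 2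

/-- **Modularity maximization is a clique partitioning problem.** For every partition
`C`, modularity equals the clique partitioning score for the weights `modW wb` plus a
constant `D = (1/T) ∑_i (w̄ i i − sᵢⁱⁿ sᵢᵒᵘᵗ / T)` independent of `C`; in particular a
partition maximizes modularity iff it maximizes the clique partitioning score. -/

lemma pair_split {n : ℕ} (h : Fin n → Fin n → ℝ) :
    ∑ i : Fin n, ∑ j : Fin n, h i j =
      (∑ i : Fin n, ∑ j : Fin n, if i < j then h i j + h j i else 0)
        + ∑ i : Fin n, h i i := by
  have h2 : (∑ i : Fin n, ∑ j : Fin n, if i < j then h j i else 0)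
      = ∑ i : Fin n, ∑ j : Fin n, if j < i then h i j else 0 := by
    rw [Finset.sum_comm]
  have h3 : (∑ i : Fin n, h i i)
      = ∑ i : Fin n, ∑ j : Fin n, if i = j then h i j else 0 := by
    refine Finset.sum_congr rfl fun i _ => ?_
    rw [Finset.sum_ite_eq (Finset.univ) i (fun j => h i j)]
    simp
  have key : ∀ i j : Fin n,
      h i j = (if i < j then h i j else 0) + (if j < i then h i j else 0)
        + (if i = j then h i j else 0) := by
    intro i j
    rcases lt_trichotomy i j with hij | hij | hij
    · simp [hij, not_lt_of_gt hij, hij.ne]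
    · simp [hij, lt_irrefl]
    · simp [hij, not_lt_of_gt hij, hij.ne']
  have split_add : ∀ i j : Fin n, (if i < j then h i j + h j i else 0)
      = (if i < j then h i j else 0) + (if i < j then h j i else 0) := by
    intro i j; by_cases hij : i < j <;> simp [hij]
  calc ∑ i : Fin n, ∑ j : Fin n, h i j
      = ∑ i : Fin n, ∑ j : Fin n,
          ((if i < j then h i j else 0) + (if j < i then h i j else 0)
            + (if i = j then h i j else 0)) :=
        Finset.sum_congr rfl fun i _ => Finset.sum_congr rfl fun j _ => key i j
    _ = _ := by
        simp only [Finset.sum_add_distrib, split_add]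
        rw [h2, ← h3]

theorem modularity_is_clique_partitioning {n : ℕ} (wb : Fin n → Fin n → ℝ)
    (hT : totalW wb ≠ 0) :
    (∀ C : Fin n → ℕ,
      modularity wb C =
        cpScore (modW wb) C
          + (1 / totalW wb) * ∑ i : Fin n, (wb i i - sIn wb i * sOut wb i / totalW wb)) ∧
    (∀ C₀ : Fin n → ℕ,
      (∀ C : Fin n → ℕ, modularity wb C ≤ modularity wb C₀) ↔
      (∀ C : Fin n → ℕ, cpScore (modW wb) C ≤ cpScore (modW wb) C₀)) := by
  have main : ∀ C : Fin n → ℕ,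
      modularity wb C =
        cpScore (modW wb) C
          + (1 / totalW wb) * ∑ i : Fin n, (wb i i - sIn wb i * sOut wb i / totalW wb) := by
    intro C
    set T := totalW wb with hTdef
    set f : Fin n → Fin n → ℝ := fun i j => wb i j - sIn wb i * sOut wb j / T with hf
    set g : Fin n → Fin n → ℝ := fun i j => if C i = C j then f i j else 0 with hg
    have hsplit := pair_split g
    have hcp : cpScore (modW wb) C
        = (1 / T) * ∑ i : Fin n, ∑ j : Fin n, if i < j then g i j + g j i else 0 := by
      rw [cpScore, Finset.mul_sum]
      refine Finset.sum_congr rfl fun i _ => ?_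
      rw [Finset.mul_sum]
      refine Finset.sum_congr rfl fun j _ => ?_
      by_cases hij : i < j
      · by_cases hC : C i = C j
        · rw [if_pos ⟨hij, hC⟩, if_pos hij]
          simp only [hg, hf, if_pos hC, if_pos hC.symm, modW]
          rw [← hTdef]
          field_simp
          ring
        · simp [hij, hC, hg, Ne.symm hC]
      · simp [hij, hg]
    have hdiag : (∑ i : Fin n, g i i) = ∑ i : Fin n, (wb i i - sIn wb i * sOut wb i / T) := by
      refine Finset.sum_congr rfl fun i _ => ?_
      simp [hg, hf]
    rw [modularity, show (∑ i : Fin n, ∑ j : Fin n,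
        if C i = C j then wb i j - sIn wb i * sOut wb j / totalW wb else 0)
        = ∑ i : Fin n, ∑ j : Fin n, g i j from rfl, hsplit, hcp, hdiag]
    ring
  refine ⟨main, fun C₀ => ?_⟩
  constructor
  · intro hmax C
    have := hmax C
    rw [main C, main C₀] at this
    linarith
  · intro hmax C
    rw [main C, main C₀]
    have := hmax C
    linarith
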